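/- The semigroup algebra C[σ_{a,b}^∨ ∩ M] is generated as a C-algebra by the four Laurent monomials t1, t2, t2^{-1}t3, and t1^{-1}t2^{b-a}t3^{a}; that is, these monomials form a Hilbert basis generating set of the dual-cone semigroup. -/
import Mathlib


/-- The semigroup `σ_{a,b}^∨ ∩ M` of lattice points of the dual cone of the cone
`σ_{a,b}` over the trapezoid `Δ(a,b)`, the cone generated by
`(0,0,1), (a,0,1), (b,1,1), (0,1,1)` in `N = ℤ³`. -/
def dualConeSemigroup (a b : ℕ) : AddSubmonoid (ℤ × ℤ × ℤ) where
  carrier := {m | 0 ≤ m.2.2 ∧ 0 ≤ (a : ℤ) * m.1 + m.2.2 ∧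
    0 ≤ (b : ℤ) * m.1 + m.2.1 + m.2.2 ∧ 0 ≤ m.2.1 + m.2.2}
  zero_mem' := by simp
  add_mem' := by
    intro x y hx hy
    simp only [Set.mem_setOf_eq, Prod.fst_add, Prod.snd_add, mul_add] at hx hy ⊢
    obtain ⟨h1, h2, h3, h4⟩ := hx
    obtain ⟨g1, g2, g3, g4⟩ := hy
    exact ⟨by linarith, by linarith, by linarith, by linarith⟩

/-- The semigroup `σ_{a,b}^∨ ∩ M` is generated by the exponent vectors
of the four Laurent monomials `t₁`, `t₂`, `t₂⁻¹t₃`, `t₁⁻¹t₂^{b-a}t₃^{a}`, i.e. by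
`(1,0,0)`, `(0,1,0)`, `(0,-1,1)`, `(-1,b-a,a)`; equivalently these monomials form a
Hilbert-basis generating set of the dual-cone semigroup, so they generate
`ℂ[σ_{a,b}^∨ ∩ M]` as a `ℂ`-algebra. -/
theorem dualConeSemigroup_eq_closure (a b : ℕ) (ha : 1 ≤ a) (hb : b ≤ a) :
    dualConeSemigroup a b =
      AddSubmonoid.closure
        {((1 : ℤ), (0 : ℤ), (0 : ℤ)), ((0 : ℤ), (1 : ℤ), (0 : ℤ)),
         ((0 : ℤ), (-1 : ℤ), (1 : ℤ)), ((-1 : ℤ), (b : ℤ) - (a : ℤ), (a : ℤ))} := by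
  apply le_antisymm
  · rintro ⟨x, y, z⟩ ⟨h1, h2, h3, h4⟩
    simp only at h1 h2 h3 h4
    have m1 : ((1 : ℤ), (0 : ℤ), (0 : ℤ)) ∈ AddSubmonoid.closure
        {((1 : ℤ), (0 : ℤ), (0 : ℤ)), ((0 : ℤ), (1 : ℤ), (0 : ℤ)),
         ((0 : ℤ), (-1 : ℤ), (1 : ℤ)), ((-1 : ℤ), (b : ℤ) - (a : ℤ), (a : ℤ))} :=
      AddSubmonoid.subset_closure (by simp)
    have m2 : ((0 : ℤ), (1 : ℤ), (0 : ℤ)) ∈ AddSubmonoid.closure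
        {((1 : ℤ), (0 : ℤ), (0 : ℤ)), ((0 : ℤ), (1 : ℤ), (0 : ℤ)),
         ((0 : ℤ), (-1 : ℤ), (1 : ℤ)), ((-1 : ℤ), (b : ℤ) - (a : ℤ), (a : ℤ))} :=
      AddSubmonoid.subset_closure (by simp)
    have m3 : ((0 : ℤ), (-1 : ℤ), (1 : ℤ)) ∈ AddSubmonoid.closure
        {((1 : ℤ), (0 : ℤ), (0 : ℤ)), ((0 : ℤ), (1 : ℤ), (0 : ℤ)),
         ((0 : ℤ), (-1 : ℤ), (1 : ℤ)), ((-1 : ℤ), (b : ℤ) - (a : ℤ), (a : ℤ))} :=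
      AddSubmonoid.subset_closure (by simp)
    have m4 : ((-1 : ℤ), (b : ℤ) - (a : ℤ), (a : ℤ)) ∈ AddSubmonoid.closure
        {((1 : ℤ), (0 : ℤ), (0 : ℤ)), ((0 : ℤ), (1 : ℤ), (0 : ℤ)),
         ((0 : ℤ), (-1 : ℤ), (1 : ℤ)), ((-1 : ℤ), (b : ℤ) - (a : ℤ), (a : ℤ))} :=
      AddSubmonoid.subset_closure (by simp)
    by_cases hx : 0 ≤ x
    · have key : (x, y, z) = x.toNat • ((1 : ℤ), (0 : ℤ), (0 : ℤ))
          + (y + z).toNat • ((0 : ℤ), (1 : ℤ), (0 : ℤ))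
          + z.toNat • ((0 : ℤ), (-1 : ℤ), (1 : ℤ)) := by
        simp only [Prod.smul_mk, Prod.mk_add_mk, nsmul_eq_mul, Prod.mk.injEq]
        refine ⟨by omega, by omega, by omega⟩
      rw [key]
      exact add_mem (add_mem (nsmul_mem m1 _) (nsmul_mem m2 _)) (nsmul_mem m3 _)
    · have key : (x, y, z) = ((b : ℤ) * x + y + z).toNat • ((0 : ℤ), (1 : ℤ), (0 : ℤ))
          + ((a : ℤ) * x + z).toNat • ((0 : ℤ), (-1 : ℤ), (1 : ℤ))
          + (-x).toNat • ((-1 : ℤ), (b : ℤ) - (a : ℤ), (a : ℤ)) := by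
        simp only [Prod.smul_mk, Prod.mk_add_mk, nsmul_eq_mul, Prod.mk.injEq]
        have hxn : ((-x).toNat : ℤ) = -x := by omega
        have h2' : (((a : ℤ) * x + z).toNat : ℤ) = (a : ℤ) * x + z := by omega
        have h3' : (((b : ℤ) * x + y + z).toNat : ℤ) = (b : ℤ) * x + y + z := by omega
        rw [hxn, h2', h3']
        refine ⟨by ring, by ring, by ring⟩
      rw [key]
      exact add_mem (add_mem (nsmul_mem m2 _) (nsmul_mem m3 _)) (nsmul_mem m4 _)
  · rw [AddSubmonoid.closure_le]
    rintro m (rfl | rfl | rfl | rfl) <;>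
      refine ⟨?_, ?_, ?_, ?_⟩ <;> simp <;> push_cast <;> omega
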